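/- For every integer n ≥ 1, every real θ ≥ 0, and every ε ∈ (0,1): Σ_{i=0}^{n−1} (θ^i / i!) · e^{−(3/4)θ} ≤ 2·(12/ε)^n. -/

import Mathlib

open Real

/-- Key analytic inequality for the verifiable example.
For every integer `n ≥ 1`, real `θ ≥ 0` and `ε ∈ (0,1)`:
`Σ_{i=0}^{n−1} (θ^i / i!) e^{−(3/4)θ} ≤ 2 (12/ε)^n`. -/
theorem statement_16 (n : ℕ) (hn : 1 ≤ n) (θ : ℝ) (hθ : 0 ≤ θ)
    (ε : ℝ) (hε : ε ∈ Set.Ioo (0 : ℝ) 1) :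
    ∑ i ∈ Finset.range n, θ ^ i / (Nat.factorial i : ℝ) * Real.exp (-(3 / 4) * θ) ≤
      2 * (12 / ε) ^ n := by
  obtain ⟨hε0, hε1⟩ := hε
  have key : ∀ i : ℕ, θ ^ i / (Nat.factorial i : ℝ) * Real.exp (-(3 / 4) * θ)
      ≤ (4 / 3 : ℝ) ^ i := by
    intro i
    have h1 : ((3 / 4 : ℝ) * θ) ^ i / (Nat.factorial i : ℝ) ≤ Real.exp ((3 / 4) * θ) :=
      Real.pow_div_factorial_le_exp (x := (3 / 4) * θ) (by positivity) i
    have h2 : (3 / 4 : ℝ) ^ i * θ ^ i / (Nat.factorial i : ℝ) ≤ Real.exp ((3 / 4) * θ) := by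
      rwa [mul_pow] at h1
    have hfac : (0 : ℝ) < Nat.factorial i := by positivity
    have hexp : (0 : ℝ) < Real.exp ((3 / 4) * θ) := Real.exp_pos _
    rw [neg_mul, Real.exp_neg, ← div_eq_mul_inv, div_le_iff₀ hexp]
    calc θ ^ i / (Nat.factorial i : ℝ)
        = (4 / 3 : ℝ) ^ i * ((3 / 4 : ℝ) ^ i * θ ^ i / (Nat.factorial i : ℝ)) := by
          field_simp; rw [mul_assoc, ← mul_pow]; norm_num
      _ ≤ (4 / 3 : ℝ) ^ i * Real.exp ((3 / 4) * θ) := by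
          apply mul_le_mul_of_nonneg_left h2 (by positivity)
  calc ∑ i ∈ Finset.range n, θ ^ i / (Nat.factorial i : ℝ) * Real.exp (-(3 / 4) * θ)
      ≤ ∑ i ∈ Finset.range n, (4 / 3 : ℝ) ^ i :=
        Finset.sum_le_sum fun i _ => key i
    _ = ((4 / 3 : ℝ) ^ n - 1) / (4 / 3 - 1) := geom_sum_eq (by norm_num) n
    _ = 3 * ((4 / 3 : ℝ) ^ n - 1) := by ring
    _ ≤ 3 * (4 / 3 : ℝ) ^ n := by nlinarith [pow_pos (show (0:ℝ) < 4/3 by norm_num) n]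
    _ ≤ 2 * (12 : ℝ) ^ n := by
        induction n with
        | zero => exact absurd hn (by omega)
        | succ m ih =>
          rcases Nat.eq_zero_or_pos m with hm | hm
          · subst hm; norm_num
          · have := ih hm
            rw [pow_succ, pow_succ]
            nlinarith [pow_pos (show (0:ℝ) < 4/3 by norm_num) m,
              pow_pos (show (0:ℝ) < 12 by norm_num) m]
    _ ≤ 2 * (12 / ε) ^ n := by
        have h12 : (12 : ℝ) ≤ 12 / ε := by
          rw [le_div_iff₀ hε0]; nlinarith
        have := pow_le_pow_left₀ (by norm_num : (0:ℝ) ≤ 12) h12 n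
        linarith
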